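/- arXiv:2006.09890 — 5 statements merged into one kernel-verified Lean document; each statement's English description precedes it below -/
import Mathlib

section
/- The Jaccard distance is a pseudometric on nonempty finite sets: for any nonempty finite sets A, B, C of elements of a type, the function d(A,B) = 1 - |A ∩ B| / |A ∪ B| (with cardinalities taken as real numbers) satisfies d(A,A) = 0, d(A,B) = d(B,A), and the triangle inequality d(A,C) ≤ d(A,B) + d(B,C). -/
open scoped symmDiff


/-- Jaccard distance on finite sets. -/
noncomputable def jaccardDist {α : Type*} [DecidableEq α] (A B : Finset α) : ℝ :=
  1 - ((A ∩ B).card : ℝ) / ((A ∪ B).card : ℝ)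

/-- Key real-variable inequality behind the Jaccard triangle inequality. -/
lemma jaccard_key (p q s m b1 b2 : ℝ) (hp : 0 ≤ p) (hq : 0 ≤ q) (hs : 0 ≤ s)
    (hm : 0 ≤ m) (h1 : s ≤ p + q) (h2 : b1 ≤ m + q) (h3 : b2 ≤ m + p)
    (hd1 : 0 < p + b1) (hd2 : 0 < q + b2) (hd3 : 0 < s + m) :
    s / (s + m) ≤ p / (p + b1) + q / (q + b2) := by
  have hpqm : 0 < p + q + m := lt_of_lt_of_le hd1 (by linarith)
  have step1 : s / (s + m) ≤ (p + q) / (p + q + m) := by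
    rw [div_le_div_iff₀ hd3 hpqm]
    nlinarith
  have step2 : p / (p + q + m) ≤ p / (p + b1) := by
    rw [div_le_div_iff₀ hpqm hd1]
    nlinarith [mul_le_mul_of_nonneg_left h2 hp]
  have step3 : q / (p + q + m) ≤ q / (q + b2) := by
    rw [div_le_div_iff₀ hpqm hd2]
    nlinarith [mul_le_mul_of_nonneg_left h3 hq]
  have : (p + q) / (p + q + m) = p / (p + q + m) + q / (p + q + m) := by ring
  linarith

/-- Card of union splits as symmetric difference plus intersection. -/
lemma card_union_eq_symmDiff_add_inter {α : Type*} [DecidableEq α] (A B : Finset α) :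
    (A ∪ B).card = (A ∆ B).card + (A ∩ B).card := by
  have h := symmDiff_sup_inf A B
  rw [Finset.sup_eq_union, Finset.inf_eq_inter, Finset.sup_eq_union] at h
  have hd := disjoint_symmDiff_inf A B
  rw [Finset.inf_eq_inter] at hd
  rw [← h, Finset.card_union_of_disjoint hd]

lemma inter_subset_inter_union_symmDiff {α : Type*} [DecidableEq α] (A B C : Finset α) :
    A ∩ B ⊆ (A ∩ C) ∪ (B ∆ C) := by
  intro x hx
  simp only [Finset.mem_inter, Finset.mem_union, Finset.mem_symmDiff] at *
  by_cases hxC : x ∈ C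
  · exact Or.inl ⟨hx.1, hxC⟩
  · exact Or.inr (Or.inl ⟨hx.2, hxC⟩)

/-- The Jaccard distance is a pseudometric on nonempty finite sets:
`d(A,A) = 0`, `d(A,B) = d(B,A)`, and `d(A,C) ≤ d(A,B) + d(B,C)`. -/
theorem jaccard_pseudometric {α : Type*} [DecidableEq α]
    (A B C : Finset α) (hA : A.Nonempty) (hB : B.Nonempty) (hC : C.Nonempty) :
    jaccardDist A A = 0 ∧
    jaccardDist A B = jaccardDist B A ∧
    jaccardDist A C ≤ jaccardDist A B + jaccardDist B C := by
  have hAcard : (0 : ℝ) < A.card := by exact_mod_cast Finset.card_pos.2 hA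
  refine ⟨?_, ?_, ?_⟩
  · simp [jaccardDist, Finset.inter_self, Finset.union_self,
      div_self (ne_of_gt hAcard)]
  · simp [jaccardDist, Finset.inter_comm, Finset.union_comm]
  -- triangle inequality
  · set p : ℝ := ((A ∆ B).card : ℝ) with hp'
    set q : ℝ := ((B ∆ C).card : ℝ) with hq'
    set s : ℝ := ((A ∆ C).card : ℝ) with hs'
    set m : ℝ := ((A ∩ C).card : ℝ) with hm'
    set b1 : ℝ := ((A ∩ B).card : ℝ) with hb1'
    set b2 : ℝ := ((B ∩ C).card : ℝ) with hb2'
    have huAB : ((A ∪ B).card : ℝ) = p + b1 := by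
      rw [card_union_eq_symmDiff_add_inter]; push_cast; ring
    have huBC : ((B ∪ C).card : ℝ) = q + b2 := by
      rw [card_union_eq_symmDiff_add_inter]; push_cast; ring
    have huAC : ((A ∪ C).card : ℝ) = s + m := by
      rw [card_union_eq_symmDiff_add_inter]; push_cast; ring
    have hdAB : (0 : ℝ) < p + b1 := by
      rw [← huAB]
      exact_mod_cast Finset.card_pos.2 (hA.mono Finset.subset_union_left)
    have hdBC : (0 : ℝ) < q + b2 := by
      rw [← huBC]
      exact_mod_cast Finset.card_pos.2 (hB.mono Finset.subset_union_left)
    have hdAC : (0 : ℝ) < s + m := by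
      rw [← huAC]
      exact_mod_cast Finset.card_pos.2 (hA.mono Finset.subset_union_left)
    have h1 : s ≤ p + q := by
      rw [hs', hp', hq']
      have hsub := Finset.card_le_card (symmDiff_triangle A B C)
      have hle := Finset.card_union_le (A ∆ B) (B ∆ C)
      exact_mod_cast le_trans hsub hle
    have h2 : b1 ≤ m + q := by
      rw [hb1', hm', hq']
      have hsub := Finset.card_le_card (inter_subset_inter_union_symmDiff A B C)
      have hle := Finset.card_union_le (A ∩ C) (B ∆ C)
      exact_mod_cast le_trans hsub hle
    have h3 : b2 ≤ m + p := by
      rw [hb2', hm', hp']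
      have hsub := inter_subset_inter_union_symmDiff C B A
      rw [Finset.inter_comm C B, Finset.inter_comm C A, symmDiff_comm B A] at hsub
      have hsub' := Finset.card_le_card hsub
      have hle := Finset.card_union_le (A ∩ C) (A ∆ B)
      exact_mod_cast le_trans hsub' hle
    have ekey := jaccard_key p q s m b1 b2 (Nat.cast_nonneg _) (Nat.cast_nonneg _)
      (Nat.cast_nonneg _) (Nat.cast_nonneg _) h1 h2 h3 hdAB hdBC hdAC
    have eAC : jaccardDist A C = s / (s + m) := by
      rw [jaccardDist, huAC, ← hm']
      field_simp
      ring
    have eAB : jaccardDist A B = p / (p + b1) := by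
      rw [jaccardDist, huAB, ← hb1']
      field_simp
      ring
    have eBC : jaccardDist B C = q / (q + b2) := by
      rw [jaccardDist, huBC, ← hb2']
      field_simp
      ring
    rw [eAC, eAB, eBC]
    exact ekey
end

section
/- Reduction from support to accuracy: let x₁, …, xₙ be finite subsets of a finite item set F (the positive transactions), and add one negative record equal to F itself. For an itemset X ⊆ F, let c(X) = |{i ∈ {1,…,n} : X ⊆ xᵢ}| be its support among the positive records. Since X ⊆ F, the positive rule with body X covers exactly c(X) positive records and the one negative record, so its accuracy equals c(X) / (c(X) + 1). Consequently, for every natural number s ≥ 1, the rule with body X has accuracy at least s/(s+1) if and only if c(X) ≥ s; hence the set of itemsets X ⊆ F whose positive rule has accuracy at least s/(s+1) is exactly the set of itemsets with support at least s, and in particular the two sets have the same cardinality. -/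
/-- Reduction from support to accuracy.  The dataset has positive records
`x 0, …, x (n-1) ⊆ F` and a single negative record equal to `F` itself
(modelled by `Option (Fin n)`, where `none` is the negative record).
For `X ⊆ F` with support `c X = |{i : X ⊆ x i}|`, the rule with body `X`
covers exactly `c X + 1` records (the `c X` positive ones and the negative
one), so its accuracy is `c X / (c X + 1)`; for every `s ≥ 1`, the accuracy
is at least `s/(s+1)` iff `c X ≥ s`, the set of itemsets whose rule has
accuracy at least `s/(s+1)` equals the set of itemsets of support at least
`s`, and in particular the two sets have the same cardinality. -/
theorem support_to_accuracy_reduction {ι : Type*} [DecidableEq ι]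
    (F : Finset ι) (n : ℕ) (x : Fin n → Finset ι) (hx : ∀ i, x i ⊆ F)
    (c : Finset ι → ℕ)
    (hc : ∀ X, c X = (Finset.univ.filter fun i : Fin n => X ⊆ x i).card)
    (s : ℕ) (hs : 1 ≤ s) :
    (∀ X ⊆ F,
      (Finset.univ.filter fun o : Option (Fin n) => X ⊆ o.elim F x).card
        = c X + 1) ∧
    (∀ X ⊆ F, ((s : ℝ) / (s + 1) ≤ (c X : ℝ) / (c X + 1) ↔ s ≤ c X)) ∧
    (F.powerset.filter fun X => (s : ℝ) / (s + 1) ≤ (c X : ℝ) / (c X + 1))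
      = (F.powerset.filter fun X => s ≤ c X) ∧
    (F.powerset.filter fun X => (s : ℝ) / (s + 1) ≤ (c X : ℝ) / (c X + 1)).card
      = (F.powerset.filter fun X => s ≤ c X).card := by
  have hiff : ∀ X : Finset ι, ((s : ℝ) / (s + 1) ≤ (c X : ℝ) / (c X + 1) ↔ s ≤ c X) := by
    intro X
    rw [div_le_div_iff₀ (by positivity) (by positivity)]
    constructor
    · intro h
      have : (s : ℝ) ≤ (c X : ℝ) := by nlinarith
      exact_mod_cast this
    · intro h
      have : (s : ℝ) ≤ (c X : ℝ) := by exact_mod_cast h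
      nlinarith
  refine ⟨?_, fun X _ => hiff X, ?_, ?_⟩
  · intro X hX
    have huniv : (Finset.univ : Finset (Option (Fin n)))
        = insert none (Finset.univ.map ⟨some, Option.some_injective _⟩) := by
      ext o
      cases o <;> simp
    rw [huniv, Finset.filter_insert]
    simp only [Option.elim_none, hX, if_true]
    rw [Finset.card_insert_of_notMem (by simp), Finset.filter_map, Finset.card_map]
    rw [hc]; rfl
  · ext X
    simp only [Finset.mem_filter, Finset.mem_powerset]
    exact and_congr_right fun _ => hiff X
  · congr 1
    ext X
    simp only [Finset.mem_filter, Finset.mem_powerset]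
    exact and_congr_right fun _ => hiff X
end

section
/- Reduction from balanced biclique to accurate rules: let G = (V₁, V₂, E) be a finite bipartite graph with E ⊆ V₁ × V₂, and let k ≥ 1 be a natural number. Then G contains a balanced biclique of size k — i.e., there exist T ⊆ V₁ and S ⊆ V₂ with |T| = |S| = k such that (v, u) ∈ E for every v ∈ T and u ∈ S — if and only if there exists a set X ⊆ V₂ with |X| ≥ k such that |{v ∈ V₁ : (v, u) ∈ E for all u ∈ X}| ≥ k. Equivalently, in the labeled dataset having one positive record N(v) = {u ∈ V₂ : (v,u) ∈ E} for each v ∈ V₁ and one negative record equal to V₂, G contains a balanced biclique of size k if and only if there is a positive rule with at least k items and accuracy at least k/(k+1). -/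
lemma aux_ratio (k n : ℕ) : (k : ℝ) / (k + 1) ≤ (n : ℝ) / (n + 1) ↔ k ≤ n := by
  rw [div_le_div_iff₀ (by positivity) (by positivity)]
  constructor
  · intro h
    have : (k : ℝ) ≤ n := by nlinarith
    exact_mod_cast this
  · intro h
    have : (k : ℝ) ≤ n := by exact_mod_cast h
    nlinarith

lemma aux_iff {α β : Type*} [DecidableEq α] [DecidableEq β]
    (V₁ : Finset α) (V₂ : Finset β) (E : Finset (α × β)) (hE : E ⊆ V₁ ×ˢ V₂)
    (k : ℕ) (hk : 1 ≤ k) :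
    (∃ T ⊆ V₁, ∃ S ⊆ V₂, T.card = k ∧ S.card = k ∧
        ∀ v ∈ T, ∀ u ∈ S, (v, u) ∈ E) ↔
      (∃ X ⊆ V₂, k ≤ X.card ∧
        k ≤ (V₁.filter fun v => ∀ u ∈ X, (v, u) ∈ E).card) := by
  constructor
  · rintro ⟨T, hT, S, hS, hTk, hSk, hadj⟩
    refine ⟨S, hS, hSk.ge, ?_⟩
    calc k = T.card := hTk.symm
      _ ≤ _ := Finset.card_le_card (fun v hv => Finset.mem_filter.2
          ⟨hT hv, fun u hu => hadj v hv u hu⟩)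
  · rintro ⟨X, hX, hXk, hF⟩
    obtain ⟨S, hSX, hSk⟩ := Finset.exists_subset_card_eq hXk
    obtain ⟨T, hTF, hTk⟩ := Finset.exists_subset_card_eq hF
    refine ⟨T, fun v hv => (Finset.mem_filter.1 (hTF hv)).1, S, hSX.trans hX,
      hTk, hSk, fun v hv u hu => (Finset.mem_filter.1 (hTF hv)).2 u (hSX hu)⟩

/-- Reduction from balanced biclique to accurate rules.  A bipartite graph
`(V₁, V₂, E)` with `E ⊆ V₁ × V₂` contains a balanced biclique of size `k ≥ 1`
iff there is a set `X ⊆ V₂` with `|X| ≥ k` whose common neighbourhood in `V₁`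
has size at least `k`; equivalently, in the dataset with one positive record
`N(v) = {u ∈ V₂ : (v,u) ∈ E}` per `v ∈ V₁` and one negative record `V₂`,
iff there is a positive rule with at least `k` items and accuracy at least
`k/(k+1)`. -/
theorem biclique_to_accurate_rule {α β : Type*} [DecidableEq α] [DecidableEq β]
    (V₁ : Finset α) (V₂ : Finset β) (E : Finset (α × β)) (hE : E ⊆ V₁ ×ˢ V₂)
    (k : ℕ) (hk : 1 ≤ k) :
    ((∃ T ⊆ V₁, ∃ S ⊆ V₂, T.card = k ∧ S.card = k ∧
        ∀ v ∈ T, ∀ u ∈ S, (v, u) ∈ E) ↔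
      (∃ X ⊆ V₂, k ≤ X.card ∧
        k ≤ (V₁.filter fun v => ∀ u ∈ X, (v, u) ∈ E).card)) ∧
    ((∃ T ⊆ V₁, ∃ S ⊆ V₂, T.card = k ∧ S.card = k ∧
        ∀ v ∈ T, ∀ u ∈ S, (v, u) ∈ E) ↔
      (∃ X ⊆ V₂, k ≤ X.card ∧
        (k : ℝ) / (k + 1) ≤
          (((V₁.filter fun v => X ⊆ V₂.filter fun u => (v, u) ∈ E).card : ℝ) /
            ((V₁.filter fun v => X ⊆ V₂.filter fun u => (v, u) ∈ E).card + 1)))) := by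
  have key : ∀ X : Finset β, X ⊆ V₂ →
      ((V₁.filter fun v => X ⊆ V₂.filter fun u => (v, u) ∈ E) =
        (V₁.filter fun v => ∀ u ∈ X, (v, u) ∈ E)) := by
    intro X hX
    apply Finset.filter_congr
    intro v _
    simp only [eq_iff_iff, Finset.subset_iff, Finset.mem_filter]
    exact ⟨fun h u hu => (h hu).2, fun h u hu => ⟨hX hu, h u hu⟩⟩
  refine ⟨aux_iff V₁ V₂ E hE k hk, (aux_iff V₁ V₂ E hE k hk).trans ?_⟩
  constructor
  · rintro ⟨X, hX, hXk, hF⟩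
    refine ⟨X, hX, hXk, ?_⟩
    rw [key X hX]
    have := (aux_ratio k (V₁.filter fun v => ∀ u ∈ X, (v, u) ∈ E).card).2 hF
    convert this using 2 <;> push_cast <;> ring
  · rintro ⟨X, hX, hXk, hF⟩
    refine ⟨X, hX, hXk, ?_⟩
    rw [key X hX] at hF
    exact (aux_ratio k (V₁.filter fun v => ∀ u ∈ X, (v, u) ∈ E).card).1
      (by convert hF using 2 <;> push_cast <;> ring)
end

section
/- Distribution of the rule-sampling algorithm: let D⁺, D⁻, D̃ be finite sets of records, each record a having a finite item set cov(a). For a triple t = (a, b, c) ∈ D⁺ × D⁻ × D̃, let R(t) = {X ⊆ cov(a) : X \ (cov(b) ∪ cov(c)) ≠ ∅}, so |R(t)| = (2^{|cov(a) \ (cov(b) ∪ cov(c))|} - 1) · 2^{|cov(a) ∩ (cov(b) ∪ cov(c))|}. Suppose the total N = Σ_t |R(t)| is positive, a triple t is drawn with probability |R(t)| / N, and then X is drawn uniformly from R(t). Then the probability of obtaining a given itemset X equals |{(a, b, c) ∈ D⁺ × D⁻ × D̃ : X ⊆ cov(a) and X \ (cov(b) ∪ cov(c)) ≠ ∅}|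 / N. -/
lemma card_filter_sdiff_ne {ι : Type*} [DecidableEq ι] (A B : Finset ι) :
    (A.powerset.filter fun X => X \ B ≠ ∅).card =
      (2 ^ (A \ B).card - 1) * 2 ^ (A ∩ B).card := by
  have h1 : A.powerset.filter (fun X => X \ B = ∅) = (A ∩ B).powerset := by
    ext X
    simp only [Finset.mem_filter, Finset.mem_powerset,
      Finset.sdiff_eq_empty_iff_subset, Finset.subset_inter_iff]
  have h2 := Finset.card_filter_add_card_filter_not
    (s := A.powerset) (p := fun X => X \ B = ∅)
  rw [h1, Finset.card_powerset, Finset.card_powerset] at h2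
  have hcard : (A \ B).card + (A ∩ B).card = A.card := Finset.card_sdiff_add_card_inter A B
  have : (A.powerset.filter fun X => ¬ (X \ B = ∅)).card = 2 ^ A.card - 2 ^ (A ∩ B).card := by
    omega
  simp only [ne_eq]
  rw [this, Nat.sub_one_mul, ← pow_add, hcard]

/-- Distribution of the rule-sampling algorithm: for each triple
`t = (a, b, c) ∈ D⁺ × D⁻ × D̃` let
`R t = {X ⊆ cov a : X \ (cov b ∪ cov c) ≠ ∅}`, so that
`|R t| = (2^{|cov a \ (cov b ∪ cov c)|} - 1) · 2^{|cov a ∩ (cov b ∪ cov c)|}`.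
If `N = Σ_t |R t| > 0`, a triple `t` is drawn with probability `|R t| / N`
and then `X` uniformly from `R t`, then the probability of obtaining a given
itemset `X` equals
`|{(a,b,c) ∈ D⁺ × D⁻ × D̃ : X ⊆ cov a ∧ X \ (cov b ∪ cov c) ≠ ∅}| / N`. -/
theorem rule_sampling_distribution {ρ ι : Type*} [DecidableEq ι]
    (Dp Dm Dc : Finset ρ) (cov : ρ → Finset ι)
    (R : ρ × ρ × ρ → Finset (Finset ι))
    (hR : ∀ t, R t = (cov t.1).powerset.filter
        fun X => X \ (cov t.2.1 ∪ cov t.2.2) ≠ ∅)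
    (N : ℕ) (hN : N = ∑ t ∈ Dp ×ˢ Dm ×ˢ Dc, (R t).card) (hNpos : 0 < N) :
    (∀ t ∈ Dp ×ˢ Dm ×ˢ Dc,
      (R t).card =
        (2 ^ (cov t.1 \ (cov t.2.1 ∪ cov t.2.2)).card - 1) *
          2 ^ (cov t.1 ∩ (cov t.2.1 ∪ cov t.2.2)).card) ∧
    (∀ X : Finset ι,
      ∑ t ∈ Dp ×ˢ Dm ×ˢ Dc, ((R t).card : ℝ) / N *
          (if X ∈ R t then 1 / ((R t).card : ℝ) else 0) =
        (((Dp ×ˢ Dm ×ˢ Dc).filter fun t =>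
            X ⊆ cov t.1 ∧ X \ (cov t.2.1 ∪ cov t.2.2) ≠ ∅).card : ℝ) / N) := by
  constructor
  · intro t _
    rw [hR t]
    exact card_filter_sdiff_ne _ _
  · intro X
    have hmem : ∀ t, X ∈ R t ↔ X ⊆ cov t.1 ∧ X \ (cov t.2.1 ∪ cov t.2.2) ≠ ∅ := by
      intro t
      rw [hR t]
      simp [Finset.mem_powerset]
    have hterm : ∀ t, ((R t).card : ℝ) / N *
        (if X ∈ R t then 1 / ((R t).card : ℝ) else 0) =
        if X ∈ R t then 1 / (N : ℝ) else 0 := by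
      intro t
      by_cases h : X ∈ R t
      · have hc : ((R t).card : ℝ) ≠ 0 := by
          have := Finset.card_pos.mpr ⟨X, h⟩
          positivity
        have hNne : (N : ℝ) ≠ 0 := by positivity
        simp only [h, if_true]
        field_simp
      · simp [h]
    simp only [hterm]
    rw [← Finset.sum_filter]
    have : (Dp ×ˢ Dm ×ˢ Dc).filter (fun t => X ∈ R t) =
        (Dp ×ˢ Dm ×ˢ Dc).filter fun t =>
          X ⊆ cov t.1 ∧ X \ (cov t.2.1 ∪ cov t.2.2) ≠ ∅ := by
      apply Finset.filter_congr
      intro t _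
      simp [hmem t]
    rw [this, Finset.sum_const, nsmul_eq_mul, mul_one_div]
end

section
/- Greedy 2-approximation for max-sum diversification with a submodular quality (Borodin, Lee, Ye): let U be a finite set, let d : U × U → ℝ≥0 satisfy d(u,u) = 0, d(u,v) = d(v,u), and d(u,w) ≤ d(u,v) + d(v,w) for all u, v, w ∈ U, let f be a nonnegative monotone non-decreasing submodular set function on subsets of U with f(∅) = 0, let λ ≥ 0, and define φ(S) = f(S) + λ · Σ_{{u,v} ⊆ S, u ≠ v} d(u,v). Let p ≤ |U| and let G be the set produced by p steps of the greedy algorithm that starts from G = ∅ and at each step adds an element u ∈ U \ G maximizing (1/2)(f(G ∪ {u}) - f(G)) + λ · Σ_{v ∈ G} d(u,v). Then φ(G) ≥ (1/2) · max{φ(S) : S ⊆ U, |S| = p}. -/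
private lemma sum_offDiag_eq' {α : Type*} [DecidableEq α] (S : Finset α) (F : α × α → ℝ) :
    ∑ q ∈ S.offDiag, F q = (∑ x ∈ S, ∑ y ∈ S, F (x, y)) - ∑ x ∈ S, F (x, x) := by
  have h3 : ∑ q ∈ S ×ˢ S, F q = ∑ x ∈ S, ∑ y ∈ S, F (x, y) := Finset.sum_product S S F
  rw [← Finset.diag_union_offDiag S, Finset.sum_union (Finset.disjoint_diag_offDiag S),
    Finset.sum_diag] at h3
  linarith

private lemma routing_lemma {α : Type*} [DecidableEq α] (U : Finset α) (d : α → α → ℝ)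
    (hd_symm : ∀ u ∈ U, ∀ v ∈ U, d u v = d v u)
    (hd_tri : ∀ u ∈ U, ∀ v ∈ U, ∀ w ∈ U, d u w ≤ d u v + d v w)
    (P Q : Finset α) (hP : P ⊆ U) (hQ : Q ⊆ U) :
    (Q.card : ℝ) * (∑ q ∈ P.offDiag, d q.1 q.2) ≤
      2 * ((P.card : ℝ) - 1) * ∑ v ∈ P, ∑ w ∈ Q, d v w := by
  have key : ∀ w ∈ Q, ∑ q ∈ P.offDiag, d q.1 q.2 ≤
      2 * ((P.card : ℝ) - 1) * ∑ v ∈ P, d v w := by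
    intro w hw
    have tri : ∑ q ∈ P.offDiag, d q.1 q.2 ≤ ∑ q ∈ P.offDiag, (d q.1 w + d w q.2) := by
      apply Finset.sum_le_sum
      intro q hq
      obtain ⟨h1, h2, _⟩ := Finset.mem_offDiag.mp hq
      exact hd_tri q.1 (hP h1) w (hQ hw) q.2 (hP h2)
    have e1 : ∑ q ∈ P.offDiag, (d q.1 w + d w q.2)
        = (∑ x ∈ P, ∑ y ∈ P, (d x w + d w y)) - ∑ x ∈ P, (d x w + d w x) :=
      sum_offDiag_eq' P (fun q => d q.1 w + d w q.2)
    have e2 : ∑ x ∈ P, ∑ y ∈ P, (d x w + d w y)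
        = (P.card : ℝ) * ∑ x ∈ P, d x w + (P.card : ℝ) * ∑ y ∈ P, d w y := by
      have : ∀ x ∈ P, ∑ y ∈ P, (d x w + d w y)
          = (P.card : ℝ) * d x w + ∑ y ∈ P, d w y := by
        intro x _
        rw [Finset.sum_add_distrib, Finset.sum_const, nsmul_eq_mul]
      rw [Finset.sum_congr rfl this, Finset.sum_add_distrib, ← Finset.mul_sum,
        Finset.sum_const, nsmul_eq_mul]
    have e3 : ∑ y ∈ P, d w y = ∑ y ∈ P, d y w :=
      Finset.sum_congr rfl (fun y hy => hd_symm w (hQ hw) y (hP hy))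
    have e4 : ∑ x ∈ P, (d x w + d w x) = 2 * ∑ x ∈ P, d x w := by
      rw [Finset.sum_add_distrib, e3]; ring
    rw [e1, e2, e3, e4] at tri
    nlinarith [tri]
  calc (Q.card : ℝ) * ∑ q ∈ P.offDiag, d q.1 q.2
      = ∑ _w ∈ Q, ∑ q ∈ P.offDiag, d q.1 q.2 := by
        rw [Finset.sum_const, nsmul_eq_mul]
    _ ≤ ∑ w ∈ Q, 2 * ((P.card : ℝ) - 1) * ∑ v ∈ P, d v w := Finset.sum_le_sum key
    _ = 2 * ((P.card : ℝ) - 1) * ∑ v ∈ P, ∑ w ∈ Q, d v w := by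
        rw [← Finset.mul_sum, Finset.sum_comm]

private lemma cross_lower {α : Type*} [DecidableEq α] (U : Finset α) (d : α → α → ℝ)
    (hd_nonneg : ∀ u ∈ U, ∀ v ∈ U, 0 ≤ d u v)
    (hd_self : ∀ u ∈ U, d u u = 0)
    (hd_symm : ∀ u ∈ U, ∀ v ∈ U, d u v = d v u)
    (hd_tri : ∀ u ∈ U, ∀ v ∈ U, ∀ w ∈ U, d u w ≤ d u v + d v w)
    (O G : Finset α) (hO : O ⊆ U) (hG : G ⊆ U) (hlt : G.card < O.card) :
    ((O \ G).card : ℝ) * (G.card : ℝ) * ((∑ q ∈ O.offDiag, d q.1 q.2) / 2) ≤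
      ((O.card : ℝ) * ((O.card : ℝ) - 1)) * ∑ v ∈ O \ G, ∑ w ∈ G, d v w := by
  classical
  set A : Finset α := O ∩ G with hA
  set B : Finset α := O \ G with hB
  set C : Finset α := G \ O with hC
  have hAU : A ⊆ U := fun x hx => hO (Finset.mem_of_mem_inter_left hx)
  have hBU : B ⊆ U := fun x hx => hO (Finset.mem_sdiff.mp hx).1
  have hCU : C ⊆ U := fun x hx => hG (Finset.mem_sdiff.mp hx).1
  -- decompositions
  have hOdec : A ∪ B = O := by
    rw [hA, hB, Finset.union_comm, Finset.sdiff_union_inter]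
  have hGdec : A ∪ C = G := by
    rw [hA, hC, Finset.inter_comm, Finset.union_comm, Finset.sdiff_union_inter]
  have hdisjAB : Disjoint A B := Finset.disjoint_sdiff.mono_left Finset.inter_subset_right
  have hdisjAC : Disjoint A C := Finset.disjoint_sdiff.mono_left Finset.inter_subset_left
  -- abbreviations
  set ODA : ℝ := ∑ q ∈ A.offDiag, d q.1 q.2 with hODA
  set ODB : ℝ := ∑ q ∈ B.offDiag, d q.1 q.2 with hODB
  set D : ℝ := ∑ v ∈ B, ∑ w ∈ A, d v w with hD
  set E : ℝ := ∑ v ∈ B, ∑ w ∈ C, d v w with hE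
  -- cross split
  have hcross : ∑ v ∈ B, ∑ w ∈ G, d v w = D + E := by
    have : ∀ v ∈ B, ∑ w ∈ G, d v w = ∑ w ∈ A, d v w + ∑ w ∈ C, d v w := by
      intro v _
      rw [← hGdec, Finset.sum_union hdisjAC]
    rw [Finset.sum_congr rfl this, Finset.sum_add_distrib]
  -- diagonal vanishes
  have diag0 : ∀ T : Finset α, T ⊆ U → ∑ x ∈ T, d x x = 0 := fun T hT =>
    Finset.sum_eq_zero (fun x hx => hd_self x (hT hx))
  -- symmetric cross
  have hABsym : ∑ v ∈ A, ∑ w ∈ B, d v w = D := by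
    rw [Finset.sum_comm]
    exact Finset.sum_congr rfl (fun v hv => Finset.sum_congr rfl
      (fun w hw => hd_symm w (hAU hw) v (hBU hv)))
  -- offDiag sum of O
  have hODO : ∑ q ∈ O.offDiag, d q.1 q.2 = ODA + ODB + 2 * D := by
    rw [sum_offDiag_eq' O (fun q => d q.1 q.2)]
    have h1 : ∑ x ∈ O, ∑ y ∈ O, d x y
        = (∑ x ∈ A, ∑ y ∈ O, d x y) + ∑ x ∈ B, ∑ y ∈ O, d x y := by
      rw [← hOdec, Finset.sum_union hdisjAB]
    have h2 : ∀ x, ∑ y ∈ O, d x y = ∑ y ∈ A, d x y + ∑ y ∈ B, d x y := by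
      intro x; rw [← hOdec, Finset.sum_union hdisjAB]
    have hAA : ∑ x ∈ A, ∑ y ∈ A, d x y = ODA := by
      rw [hODA, sum_offDiag_eq' A (fun q => d q.1 q.2), diag0 A hAU]; ring
    have hBB : ∑ x ∈ B, ∑ y ∈ B, d x y = ODB := by
      rw [hODB, sum_offDiag_eq' B (fun q => d q.1 q.2), diag0 B hBU]; ring
    have hO0 : ∑ x ∈ O, d x x = 0 := diag0 O hO
    have hsplit : ∑ x ∈ O, ∑ y ∈ O, d x y
        = ((∑ x ∈ A, ∑ y ∈ A, d x y) + ∑ x ∈ A, ∑ y ∈ B, d x y)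
          + ((∑ x ∈ B, ∑ y ∈ A, d x y) + ∑ x ∈ B, ∑ y ∈ B, d x y) := by
      conv_lhs => rw [← hOdec]
      rw [Finset.sum_union hdisjAB]
      congr 1 <;> rw [← Finset.sum_add_distrib] <;>
        exact Finset.sum_congr rfl (fun x _ => Finset.sum_union hdisjAB)
    rw [hsplit, hO0, hAA, hBB, hABsym]
    have : ∑ x ∈ B, ∑ y ∈ A, d x y = D := rfl
    rw [this]
    ring
  -- routing inequalities
  have C1 : (B.card : ℝ) * ODA ≤ 2 * ((A.card : ℝ) - 1) * D := by
    have := routing_lemma U d hd_symm hd_tri A B hAU hBU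
    rwa [hABsym] at this
  have C2 : (A.card : ℝ) * ODB ≤ 2 * ((B.card : ℝ) - 1) * D :=
    routing_lemma U d hd_symm hd_tri B A hBU hAU
  have C3 : (C.card : ℝ) * ODB ≤ 2 * ((B.card : ℝ) - 1) * E :=
    routing_lemma U d hd_symm hd_tri B C hBU hCU
  -- nonnegativity
  have hD0 : 0 ≤ D := Finset.sum_nonneg fun v hv => Finset.sum_nonneg
    fun w hw => hd_nonneg v (hBU hv) w (hAU hw)
  have hE0 : 0 ≤ E := Finset.sum_nonneg fun v hv => Finset.sum_nonneg
    fun w hw => hd_nonneg v (hBU hv) w (hCU hw)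
  -- cards
  have hab : A.card + B.card = O.card := Finset.card_inter_add_card_sdiff O G
  have hac : A.card + C.card = G.card := by
    rw [hA, Finset.inter_comm]
    exact Finset.card_inter_add_card_sdiff G O
  have helt : C.card < B.card := by omega
  -- real card facts
  have hpa : (O.card : ℝ) = (A.card : ℝ) + (B.card : ℝ) := by
    rw [← hab]; push_cast; ring
  have hia : (G.card : ℝ) = (A.card : ℝ) + (C.card : ℝ) := by
    rw [← hac]; push_cast; ring
  have hte : (C.card : ℝ) + 1 ≤ (B.card : ℝ) := by exact_mod_cast helt
  have ha0 : (0:ℝ) ≤ (A.card : ℝ) := Nat.cast_nonneg _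
  have he0 : (0:ℝ) ≤ (C.card : ℝ) := Nat.cast_nonneg _
  have ht0 : (0:ℝ) ≤ (B.card : ℝ) := Nat.cast_nonneg _
  rw [hcross, hODO, hpa, hia]
  set a : ℝ := (A.card : ℝ)
  set t : ℝ := (B.card : ℝ)
  set e : ℝ := (C.card : ℝ)
  -- final certificate
  have h1 : (a + e) * ((t) * ODA) ≤ (a + e) * (2 * (a - 1) * D) :=
    mul_le_mul_of_nonneg_left C1 (by linarith)
  have h2 : (t - e) * (a * ODB) ≤ (t - e) * (2 * (t - 1) * D) :=
    mul_le_mul_of_nonneg_left C2 (by linarith)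
  have h3 : (a + t) * (e * ODB) ≤ (a + t) * (2 * (t - 1) * E) :=
    mul_le_mul_of_nonneg_left C3 (by linarith)
  have hs1 : 0 ≤ a * (t - e) * D := mul_nonneg (mul_nonneg ha0 (by linarith)) hD0
  have hs2 : 0 ≤ (a + t) * a * E := mul_nonneg (mul_nonneg (by linarith) ha0) hE0
  nlinarith [h1, h2, h3, hs1, hs2]




/-- Greedy 2-approximation for max-sum diversification with a submodular
quality (Borodin–Lee–Ye).  `d` is a pseudometric on the finite ground set
`U`, `f` a nonnegative, normalized, monotone submodular quality,
`φ(S) = f(S) + λ · Σ_{{u,v} ⊆ S, u ≠ v} d(u,v)` (the sum over unordered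
pairs, here written as half the sum over ordered pairs of distinct
elements).  The set `G p` produced by `p` greedy steps, each adding an
element of `U \ G` maximizing
`(1/2)(f(G ∪ {u}) - f(G)) + λ Σ_{v ∈ G} d(u,v)`,
satisfies `φ(G p) ≥ (1/2)·max{φ(S) : S ⊆ U, |S| = p}`. -/
theorem greedy_max_sum_diversification {α : Type*} [DecidableEq α]
    (U : Finset α) (d : α → α → ℝ) (f : Finset α → ℝ) (lam : ℝ)
    (hd_nonneg : ∀ u ∈ U, ∀ v ∈ U, 0 ≤ d u v)
    (hd_self : ∀ u ∈ U, d u u = 0)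
    (hd_symm : ∀ u ∈ U, ∀ v ∈ U, d u v = d v u)
    (hd_tri : ∀ u ∈ U, ∀ v ∈ U, ∀ w ∈ U, d u w ≤ d u v + d v w)
    (hf_nonneg : ∀ S : Finset α, 0 ≤ f S)
    (hf_empty : f ∅ = 0)
    (hf_mono : ∀ S T : Finset α, S ⊆ T → f S ≤ f T)
    (hf_submod : ∀ S T : Finset α, S ⊆ T → ∀ u ∉ T,
      f (insert u T) - f T ≤ f (insert u S) - f S)
    (hlam : 0 ≤ lam)
    (φ : Finset α → ℝ)
    (hφ : ∀ S, φ S = f S + lam * ((∑ q ∈ S.offDiag, d q.1 q.2) / 2))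
    (p : ℕ) (hp : p ≤ U.card)
    (G : ℕ → Finset α)
    (hG0 : G 0 = ∅)
    (hGsub : ∀ i, G i ⊆ U)
    (hGstep : ∀ i < p, ∃ u ∈ U \ G i,
      G (i + 1) = insert u (G i) ∧
      ∀ v ∈ U \ G i,
        (1 / 2) * (f (insert v (G i)) - f (G i)) + lam * ∑ w ∈ G i, d v w ≤
        (1 / 2) * (f (insert u (G i)) - f (G i)) + lam * ∑ w ∈ G i, d u w) :
    ∀ S ⊆ U, S.card = p → φ S ≤ 2 * φ (G p) := by
  intro S hSU hScard
  by_cases hp0 : p = 0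
  · subst hp0
    have hSempty : S = ∅ := Finset.card_eq_zero.mp hScard
    subst hSempty
    rw [hφ, hφ, hG0]
    simp [hf_empty]
  have hp1 : 1 ≤ p := Nat.one_le_iff_ne_zero.mpr hp0
  -- insertion formula for the off-diagonal sum
  have hWins : ∀ (T : Finset α), T ⊆ U → ∀ u ∈ U, u ∉ T →
      (∑ qq ∈ (insert u T).offDiag, d qq.1 qq.2)
        = (∑ qq ∈ T.offDiag, d qq.1 qq.2) + 2 * ∑ w ∈ T, d u w := by
    intro T hT u hu huT
    rw [sum_offDiag_eq' (insert u T) (fun qq => d qq.1 qq.2),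
        sum_offDiag_eq' T (fun qq => d qq.1 qq.2)]
    have h1 : ∑ x ∈ insert u T, ∑ y ∈ insert u T, d x y
        = (d u u + ∑ y ∈ T, d u y) + ∑ x ∈ T, (d x u + ∑ y ∈ T, d x y) := by
      rw [Finset.sum_insert huT]
      congr 1
      · rw [Finset.sum_insert huT]
      · exact Finset.sum_congr rfl (fun x _ => Finset.sum_insert huT)
    have h2 : ∑ x ∈ insert u T, d x x = d u u + ∑ x ∈ T, d x x :=
      Finset.sum_insert huT
    have h3 : ∑ x ∈ T, (d x u + ∑ y ∈ T, d x y)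
        = ∑ x ∈ T, d u x + ∑ x ∈ T, ∑ y ∈ T, d x y := by
      rw [Finset.sum_add_distrib]
      congr 1
      exact Finset.sum_congr rfl (fun x hx => hd_symm x (hT hx) u hu)
    rw [h1, h2, h3]
    ring
  -- cards of the greedy sets
  have hGcard : ∀ i, i ≤ p → (G i).card = i := by
    intro i
    induction i with
    | zero => intro _; rw [hG0]; simp
    | succ n ih =>
      intro hn
      obtain ⟨u, hu, hGeq, _⟩ := hGstep n (by omega)
      rw [hGeq, Finset.card_insert_of_notMem (Finset.mem_sdiff.mp hu).2, ih (by omega)]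
  -- monotone chain
  have hmono : ∀ j, j ≤ p → ∀ i, i ≤ j → G i ⊆ G j := by
    intro j
    induction j with
    | zero =>
      intro _ i hi
      have : i = 0 := Nat.le_zero.mp hi
      subst this; exact subset_rfl
    | succ n ih =>
      intro hn i hi
      rcases Nat.lt_or_ge i (n+1) with h | h
      · obtain ⟨u, _, hGeq, _⟩ := hGstep n (by omega)
        have hsub : G i ⊆ G n := ih (by omega) i (by omega)
        rw [hGeq]
        exact hsub.trans (Finset.subset_insert u (G n))
      · have : i = n + 1 := by omega
        subst this; exact subset_rfl
  -- submodular marginal-sum bound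
  have submod_sum : ∀ (B T : Finset α), Disjoint B T →
      f (T ∪ B) - f T ≤ ∑ v ∈ B, (f (insert v T) - f T) := by
    intro B
    induction B using Finset.induction_on with
    | empty => intro T _; simp
    | @insert v B' hvB ih =>
      intro T hdisj
      have hvT : v ∉ T := Finset.disjoint_left.mp hdisj (Finset.mem_insert_self v B')
      have hd2 : Disjoint B' T := hdisj.mono_left (Finset.subset_insert v B')
      rw [Finset.sum_insert hvB]
      have hvTB : v ∉ T ∪ B' := by
        simp only [Finset.mem_union, not_or]
        exact ⟨hvT, hvB⟩
      have key := hf_submod T (T ∪ B') Finset.subset_union_left v hvTB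
      have hrw : T ∪ insert v B' = insert v (T ∪ B') := by
        rw [Finset.union_insert]
      have ihB := ih T hd2
      rw [hrw]
      linarith
  -- abbreviations
  set WO2 : ℝ := (∑ qq ∈ S.offDiag, d qq.1 qq.2) / 2 with hWO2
  set q : ℝ := (p : ℝ) * ((p : ℝ) - 1) with hq
  set Mf : ℝ := max 0 (f S - f (G p)) with hMf
  set g : ℕ → ℝ :=
    fun j => f (G j) / 2 + lam * ((∑ qq ∈ (G j).offDiag, d qq.1 qq.2) / 2) with hgdef
  have hMf0 : 0 ≤ Mf := le_max_left _ _
  have hWO20 : 0 ≤ WO2 := by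
    apply div_nonneg _ (by norm_num)
    apply Finset.sum_nonneg
    intro qq hqq
    obtain ⟨h1, h2, _⟩ := Finset.mem_offDiag.mp hqq
    exact hd_nonneg qq.1 (hSU h1) qq.2 (hSU h2)
  have hpR : (1:ℝ) ≤ (p:ℝ) := by exact_mod_cast hp1
  -- per-step estimate
  have step : ∀ i, i < p →
      Mf / (2*(p:ℝ)) + lam * ((i:ℝ) * WO2 / q) ≤ g (i+1) - g i := by
    intro i hip
    obtain ⟨u, hu, hGeq, hgr⟩ := hGstep i hip
    have huU : u ∈ U := (Finset.mem_sdiff.mp hu).1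
    have huG : u ∉ G i := (Finset.mem_sdiff.mp hu).2
    have hGiU : G i ⊆ U := hGsub i
    have hcardGi : (G i).card = i := hGcard i (le_of_lt hip)
    have hdiff : g (i+1) - g i
        = (1/2) * (f (insert u (G i)) - f (G i)) + lam * ∑ w ∈ G i, d u w := by
      simp only [hgdef]
      rw [hGeq, hWins (G i) hGiU u huU huG]
      ring
    set B : Finset α := S \ G i with hBdef
    have hBU : B ⊆ U := fun x hx => hSU (Finset.mem_sdiff.mp hx).1
    have hBcard_pos : 0 < B.card := by
      rw [hBdef]
      have h := Finset.le_card_sdiff (G i) S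
      rw [hScard, hcardGi] at h
      omega
    have hBcardp : B.card ≤ p := by
      rw [hBdef]
      have := Finset.card_le_card (Finset.sdiff_subset : S \ G i ⊆ S)
      omega
    have havg : ∑ v ∈ B, ((1/2) * (f (insert v (G i)) - f (G i)) + lam * ∑ w ∈ G i, d v w)
        ≤ (B.card : ℝ) * ((1/2) * (f (insert u (G i)) - f (G i)) + lam * ∑ w ∈ G i, d u w) := by
      have h := Finset.sum_le_card_nsmul B
        (fun v => (1/2) * (f (insert v (G i)) - f (G i)) + lam * ∑ w ∈ G i, d v w)
        ((1/2) * (f (insert u (G i)) - f (G i)) + lam * ∑ w ∈ G i, d u w)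
        (fun v hv => by
          rcases Finset.mem_sdiff.mp hv with ⟨hvS, hvG⟩
          exact hgr v (Finset.mem_sdiff.mpr ⟨hSU hvS, hvG⟩))
      rwa [nsmul_eq_mul] at h
    have hsplit : ∑ v ∈ B, ((1/2) * (f (insert v (G i)) - f (G i)) + lam * ∑ w ∈ G i, d v w)
        = (1/2) * (∑ v ∈ B, (f (insert v (G i)) - f (G i)))
          + lam * ∑ v ∈ B, ∑ w ∈ G i, d v w := by
      rw [Finset.sum_add_distrib, Finset.mul_sum, Finset.mul_sum]
    have hmarg : Mf ≤ ∑ v ∈ B, (f (insert v (G i)) - f (G i)) := by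
      apply max_le
      · apply Finset.sum_nonneg
        intro v hv
        have := hf_mono (G i) (insert v (G i)) (Finset.subset_insert v (G i))
        linarith
      · have h1 : f S ≤ f (G i ∪ B) := by
          apply hf_mono
          rw [hBdef, Finset.union_sdiff_self_eq_union]
          exact Finset.subset_union_right
        have h2 : f (G i) ≤ f (G p) := hf_mono _ _ (hmono p le_rfl i (le_of_lt hip))
        have h3 : f (G i ∪ B) - f (G i) ≤ ∑ v ∈ B, (f (insert v (G i)) - f (G i)) :=
          submod_sum B (G i) Finset.sdiff_disjoint
        linarith
    have hcross0 : 0 ≤ ∑ v ∈ B, ∑ w ∈ G i, d v w :=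
      Finset.sum_nonneg fun v hv => Finset.sum_nonneg fun w hw =>
        hd_nonneg v (hBU hv) w (hGiU hw)
    have hdist : (B.card : ℝ) * ((i:ℝ) * WO2 / q) ≤ ∑ v ∈ B, ∑ w ∈ G i, d v w := by
      rcases Nat.eq_zero_or_pos i with h0 | hipos
      · subst h0
        simp only [Nat.cast_zero, zero_mul, zero_div, mul_zero]
        exact hcross0
      · have hp2 : 2 ≤ p := by omega
        have hq0 : (0:ℝ) < q := by
          rw [hq]
          have h2R : (2:ℝ) ≤ (p:ℝ) := by exact_mod_cast hp2
          nlinarith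
        have hcl := cross_lower U d hd_nonneg hd_self hd_symm hd_tri S (G i) hSU hGiU
          (by rw [hcardGi, hScard]; exact hip)
        rw [hcardGi, hScard] at hcl
        rw [← hWO2, ← hq] at hcl
        have hrw : (B.card:ℝ) * ((i:ℝ) * WO2 / q) = ((S \ G i).card : ℝ) * (i:ℝ) * WO2 / q := by
          rw [hBdef]; ring
        rw [hrw, div_le_iff₀ hq0, hBdef]
        calc ((S \ G i).card : ℝ) * (i:ℝ) * WO2
            ≤ q * ∑ v ∈ S \ G i, ∑ w ∈ G i, d v w := hcl
          _ = (∑ v ∈ S \ G i, ∑ w ∈ G i, d v w) * q := by ring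
    -- combine
    rw [hdiff]
    have hBpos : (0:ℝ) < (B.card : ℝ) := by exact_mod_cast hBcard_pos
    have hBlep : (B.card : ℝ) ≤ (p:ℝ) := by exact_mod_cast hBcardp
    apply le_of_mul_le_mul_left _ hBpos
    calc (B.card:ℝ) * (Mf / (2*(p:ℝ)) + lam * ((i:ℝ) * WO2 / q))
        = (B.card:ℝ) * (Mf / (2*(p:ℝ))) + lam * ((B.card:ℝ) * ((i:ℝ) * WO2 / q)) := by
          ring
      _ ≤ Mf / 2 + lam * ∑ v ∈ B, ∑ w ∈ G i, d v w := by
          apply add_le_add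
          · have e1 : (B.card:ℝ) * (Mf / (2*(p:ℝ))) ≤ (p:ℝ) * (Mf / (2*(p:ℝ))) := by
              apply mul_le_mul_of_nonneg_right hBlep
              positivity
            have e2 : (p:ℝ) * (Mf / (2*(p:ℝ))) = Mf / 2 := by
              field_simp
            linarith
          · exact mul_le_mul_of_nonneg_left hdist hlam
      _ ≤ (1/2) * (∑ v ∈ B, (f (insert v (G i)) - f (G i)))
            + lam * ∑ v ∈ B, ∑ w ∈ G i, d v w := by
          have : Mf / 2 ≤ (1/2) * ∑ v ∈ B, (f (insert v (G i)) - f (G i)) := by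
            linarith
          linarith
      _ = ∑ v ∈ B, ((1/2) * (f (insert v (G i)) - f (G i)) + lam * ∑ w ∈ G i, d v w) :=
          hsplit.symm
      _ ≤ (B.card:ℝ) * ((1/2) * (f (insert u (G i)) - f (G i)) + lam * ∑ w ∈ G i, d u w) :=
          havg
  -- telescoping
  have htel : ∑ i ∈ Finset.range p, (g (i+1) - g i) = g p - g 0 :=
    Finset.sum_range_sub g p
  have hg0 : g 0 = 0 := by
    simp only [hgdef]
    rw [hG0]
    simp [hf_empty]
  have hlower : ∑ i ∈ Finset.range p, (Mf / (2*(p:ℝ)) + lam * ((i:ℝ) * WO2 / q))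
      ≤ ∑ i ∈ Finset.range p, (g (i+1) - g i) :=
    Finset.sum_le_sum fun i hi => step i (Finset.mem_range.mp hi)
  have hsum_split : ∑ i ∈ Finset.range p, (Mf / (2*(p:ℝ)) + lam * ((i:ℝ) * WO2 / q))
      = (p:ℝ) * (Mf / (2*(p:ℝ))) + lam * WO2 / q * ∑ i ∈ Finset.range p, (i:ℝ) := by
    rw [Finset.sum_add_distrib, Finset.sum_const, Finset.card_range, nsmul_eq_mul]
    congr 1
    rw [Finset.mul_sum]
    exact Finset.sum_congr rfl fun i _ => by ring
  have hconst : (p:ℝ) * (Mf / (2*(p:ℝ))) = Mf / 2 := by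
    field_simp
  have hdistsum : lam * WO2 / q * ∑ i ∈ Finset.range p, (i:ℝ) = lam * WO2 / 2 := by
    by_cases hp1' : p = 1
    · subst hp1'
      have hS1 : WO2 = 0 := by
        obtain ⟨x, hx⟩ := Finset.card_eq_one.mp hScard
        rw [hWO2, hx]
        simp
      rw [hS1]
      simp
    · have hp2 : 2 ≤ p := by omega
      have hq0 : (0:ℝ) < q := by
        rw [hq]
        have h2R : (2:ℝ) ≤ (p:ℝ) := by exact_mod_cast hp2
        nlinarith
      have hgauss : (∑ i ∈ Finset.range p, (i:ℝ)) * 2 = q := by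
        have h := Finset.sum_range_id_mul_two p
        have hcast : (((∑ i ∈ Finset.range p, i) * 2 : ℕ) : ℝ) = ((p * (p-1) : ℕ) : ℝ) := by
          exact_mod_cast congrArg (Nat.cast : ℕ → ℝ) h
        push_cast [Nat.cast_sub hp1] at hcast
        rw [hq]
        push_cast
        linarith
      have : ∑ i ∈ Finset.range p, (i:ℝ) = q / 2 := by linarith
      rw [this]
      field_simp
      try ring
  have hmain : Mf / 2 + lam * WO2 / 2 ≤ g p := by
    rw [htel, hg0, hsum_split, hconst, hdistsum] at hlower
    linarith
  -- conclude
  have hgp : g p = f (G p) / 2 + lam * ((∑ qq ∈ (G p).offDiag, d qq.1 qq.2) / 2) := by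
    simp only [hgdef]
  have hMfge : f S - f (G p) ≤ Mf := le_max_right _ _
  rw [hφ, hφ, ← hWO2]
  rw [hgp] at hmain
  linarith
end
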